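/- Let G be an inverse semigroup, H' ⊆ G a finite sub-inverse semigroup, and A a G-algebra. For all a, b, c ∈ A, all r, g, h ∈ G_H and all s ∈ G, the following identity holds in 𝔽(G,A): [s g ∈ G_H]·[r ≡ s g]·[g* s* h ∈ H] · α_{g*}(α_{s*}(α_s(b*)·a*·c)) · (g* s* h) = [g* s* h ∈ H]·[s*·r ∈ G_H]·[s*·h ∈ G_H]·[s*·r ≡ s*·h] · α_{g*}(b*·α_{s*}(a*)·α_{s*}(c)) · (g* s* h), where each bracket [P] is the scalar 1 if the assertion P holds and 0 otherwise. (This is the identity of the two expressions (x4) and (x5) proving ⟨f x, y⟩_{B₀} = ⟨x, f* y⟩_{B₀} on standard elements.) -/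

import Mathlib

/-! Common setup: inverse semigroups, G-algebras, and the universal *-algebra 𝔽(G,A). -/

noncomputable section

/-- An inverse semigroup: a semigroup in which every element `g` has a unique
generalized inverse, denoted `star g`. -/
class InverseSemigroup (G : Type*) extends Semigroup G, Star G where
  mul_star_mul_self : ∀ g : G, g * star g * g = g
  star_mul_self_mul_star : ∀ g : G, star g * g * star g = star g
  star_unique : ∀ g h : G, g * h * g = g → h * g * h = h → h = star g

namespace Green

/-! ### The free complex *-algebra on a set of generators

The free complex *-algebra on a set `Y` is realized as the monoid algebra of the free
monoid on the letters `Y × Bool` (a generator together with a formal star flag); its star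
operation conjugates coefficients, reverses words and flips the star flags. -/

/-- The free complex *-algebra on the set `Y`. -/
abbrev FreeStar (Y : Type*) := MonoidAlgebra ℂ (FreeMonoid (Y × Bool))

namespace FreeStar

variable {Y : Type*}

/-- Star of a word: reverse it and flip all star flags. -/
def wordStar (w : FreeMonoid (Y × Bool)) : FreeMonoid (Y × Bool) :=
  FreeMonoid.ofList (((FreeMonoid.toList w).map fun x => (x.1, !x.2)).reverse)

lemma wordStar_mul (v w : FreeMonoid (Y × Bool)) :
    wordStar (v * w) = wordStar w * wordStar v := by
  simp [wordStar, FreeMonoid.toList_mul]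

lemma wordStar_wordStar (w : FreeMonoid (Y × Bool)) : wordStar (wordStar w) = w := by
  simp [wordStar, List.map_reverse, List.map_map, Function.comp_def]

/-- The star operation on the free complex *-algebra, as an additive map. -/
def starAux : FreeStar Y →+ FreeStar Y :=
  (MonoidAlgebra.coeffAddEquiv.symm.toAddMonoidHom.comp
    ((Finsupp.mapDomain.addMonoidHom wordStar).comp
      (Finsupp.mapRange.addMonoidHom (starRingEnd ℂ).toAddMonoidHom))).comp
    MonoidAlgebra.coeffAddEquiv.toAddMonoidHom

lemma starAux_apply (f : FreeStar Y) :
    starAux f = MonoidAlgebra.ofCoeff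
      (Finsupp.mapDomain wordStar (Finsupp.mapRange (starRingEnd ℂ) (map_zero _) f.coeff)) :=
  rfl

lemma starAux_single (w : FreeMonoid (Y × Bool)) (c : ℂ) :
    starAux (MonoidAlgebra.single w c) = MonoidAlgebra.single (wordStar w) (starRingEnd ℂ c) := by
  rw [starAux_apply]
  simp [← MonoidAlgebra.ofCoeff_single, Finsupp.mapRange_single, Finsupp.mapDomain_single]

instance instStarRing : StarRing (FreeStar Y) where
  star := starAux
  star_involutive := by
    intro f
    induction f using MonoidAlgebra.induction_linear with
    | zero => simp
    | add f g hf hg => simp_all [map_add]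
    | single w c => simp [starAux_single, wordStar_wordStar, starRingEnd_self_apply]
  star_mul := by
    intro f g
    show starAux (f * g) = starAux g * starAux f
    induction f using MonoidAlgebra.induction_linear with
    | zero => simp
    | add f f' hf hf' => simp [mul_add, add_mul, map_add, hf, hf']
    | single w c =>
      induction g using MonoidAlgebra.induction_linear with
      | zero => simp
      | add g g' hg hg' => simp [mul_add, add_mul, map_add, hg, hg']
      | single v d =>
        simp only [MonoidAlgebra.single_mul_single, starAux_single, wordStar_mul, map_mul]
        rw [mul_comm]
  star_add := map_add _

end FreeStar

section GAlgebra

variable {G : Type*} [InverseSemigroup G]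
variable {A : Type*} [NonUnitalNormedRing A] [StarRing A] [CStarRing A] [NormedSpace ℂ A]
  [IsScalarTower ℂ A A] [SMulCommClass ℂ A A] [StarModule ℂ A] [CompleteSpace A]

/-- `α` is an action of the inverse semigroup `G` on the C*-algebra `A` making it a
`G`-algebra: a semigroup homomorphism `G → End(A)` into the *-endomorphisms of `A` such
that `g g*(a)·b = a·g g*(b)` for all `a b : A` and `g : G`. -/
structure IsGAlgebra (α : G → A →⋆ₙₐ[ℂ] A) : Prop where
  map_mul : ∀ g h : G, α (g * h) = (α g).comp (α h)
  central : ∀ (g : G) (a b : A), α (g * star g) a * b = a * α (g * star g) b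

variable (α : G → A →⋆ₙₐ[ℂ] A)

/-- The generator of the free *-algebra corresponding to `a ∈ A`. -/
def genA (a : A) : FreeStar (A ⊕ G) := MonoidAlgebra.single (FreeMonoid.of (Sum.inl a, false)) 1

/-- The generator of the free *-algebra corresponding to `g ∈ G`. -/
def genG (g : G) : FreeStar (A ⊕ G) := MonoidAlgebra.single (FreeMonoid.of (Sum.inr g, false)) 1

/-- The defining relations of `𝔽(G,A)`: the *-algebra relations of `A` are respected, the
multiplication and involution of `G` are respected, and `g(a)·g g* = g·a·g*`,
`[g g*, a] = 0` hold; the relation is moreover closed under `star`, so that the ideal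
generated by it is a two-sided *-ideal. -/
inductive Rel : FreeStar (A ⊕ G) → FreeStar (A ⊕ G) → Prop
  | add_A (a b : A) : Rel (genA (G := G) (a + b)) (genA a + genA b)
  | smul_A (c : ℂ) (a : A) : Rel (genA (G := G) (c • a)) (c • genA a)
  | mul_A (a b : A) : Rel (genA (G := G) (a * b)) (genA a * genA b)
  | star_A (a : A) : Rel (genA (G := G) (star a)) (star (genA a))
  | mul_G (g h : G) : Rel (genG (A := A) (g * h)) (genG g * genG h)
  | star_G (g : G) : Rel (genG (A := A) (star g)) (star (genG g))
  | act (g : G) (a : A) :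
      Rel (genA (α g a) * genG g * genG (star g)) (genG g * genA a * genG (star g))
  | comm (g : G) (a : A) :
      Rel (genG g * genG (star g) * genA a) (genA a * genG g * genG (star g))
  | star_cl {x y} : Rel x y → Rel (star x) (star y)

/-- The universal *-algebra `𝔽(G,A)`: the quotient of the free complex *-algebra on the
set `A ⊔ G` by the two-sided *-ideal generated by the defining relations. -/
abbrev F := RingQuot (Rel α)

instance : StarRing (F α) := RingQuot.starRing _ (fun _ _ h => Rel.star_cl h)

/-- The canonical copy of `a ∈ A` inside `𝔽(G,A)`. -/
def ιA (a : A) : F α := RingQuot.mkAlgHom ℂ (Rel α) (genA a)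

/-- The canonical copy of `g ∈ G` inside `𝔽(G,A)`. -/
def ιG (g : G) : F α := RingQuot.mkAlgHom ℂ (Rel α) (genG g)

/-- The element `e₀(1-e₁)⋯(1-eₙ)` of `𝔽(G,A)` (product expanded multiplicatively),
given `e₀` and the list `[e₁, …, eₙ]`. -/
def elemP (e₀ : G) (l : List G) : F α :=
  l.foldl (fun p e => p - p * ιG α e) (ιG α e₀)

/-- The element `g·e₀(1-e₁)⋯(1-eₙ)` of `𝔽(G,A)`. -/
def elemGE (g e₀ : G) (l : List G) : F α := ιG α g * elemP α e₀ l

/-- The set `E(G)` of projections `e₀(1-e₁)⋯(1-eₙ)` in `𝔽(G,A)`, with `e₀, …, eₙ`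
idempotents of `G`. -/
def EG : Set (F α) :=
  {x | ∃ (e₀ : G) (l : List G), e₀ * e₀ = e₀ ∧ (∀ e ∈ l, e * e = e) ∧ x = elemP α e₀ l}

/-- The inverse semigroup `G_E = {g·p | g ∈ G, p ∈ E(G)}` inside `𝔽(G,A)`. -/
def GE : Set (F α) :=
  {x | ∃ (g e₀ : G) (l : List G),
    e₀ * e₀ = e₀ ∧ (∀ e ∈ l, e * e = e) ∧ x = elemGE α g e₀ l}

/-- The extension of the `G`-action along a list: `(id - α e₁)∘⋯∘(id - α eₙ)`. -/
def actL : List G → A → A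
  | [] => id
  | e :: l => fun a => actL l a - α e (actL l a)

/-- The extension of the `G`-action to `E(G)`:
`α_{e₀(1-e₁)⋯(1-eₙ)} = α_{e₀}∘(id - α_{e₁})∘⋯∘(id - α_{eₙ})`. -/
def actP (e₀ : G) (l : List G) : A → A := fun a => α e₀ (actL α l a)

/-- The extension of the `G`-action to `G_E`: `α_{g·p} = α_g ∘ α_p`. -/
def actGE (g e₀ : G) (l : List G) : A → A := fun a => α g (actP α e₀ l a)

/-- The action of `k* = (g·e₀(1-e₁)⋯(1-eₙ))* = g*·(g e₀ g*)(1 - g e₁ g*)⋯(1 - g eₙ g*)`,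
for `k = g·e₀(1-e₁)⋯(1-eₙ) ∈ G_E`. -/
def actStar (g e₀ : G) (l : List G) : A → A :=
  fun a => α (star g) (actP α (g * e₀ * star g) (l.map fun e => g * e * star g) a)

/-- The subalgebra `A_{k k*} = α_{k k*}(A) = (α_k ∘ α_{k*})(A)`,
for `k = g·e₀(1-e₁)⋯(1-eₙ) ∈ G_E`. -/
def carrier (g e₀ : G) (l : List G) : Set A :=
  Set.range fun a => actGE α g e₀ l (actStar α g e₀ l a)

/-- `S` is a sub-inverse semigroup of `G`: a subset closed under multiplication and
involution. -/
structure IsSubInvSemigroup (S : Set G) : Prop where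
  mul_mem : ∀ {a b : G}, a ∈ S → b ∈ S → a * b ∈ S
  star_mem : ∀ {a : G}, a ∈ S → star a ∈ S

variable (S : Set G)

/-- The set `E(H')` of projections `e₀(1-e₁)⋯(1-eₙ)` with `e₀, …, eₙ` idempotents of
`H' = S`. -/
def EH : Set (F α) :=
  {x | ∃ (e₀ : G) (l : List G), (e₀ ∈ S ∧ e₀ * e₀ = e₀) ∧ (∀ e ∈ l, e ∈ S ∧ e * e = e) ∧
    x = elemP α e₀ l}

/-- `H⁽⁰⁾`: the set of nonzero minimal projections of `E(H')`
(where `q ≤ p` means `q p = q`). -/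
def H0 : Set (F α) :=
  {p | p ∈ EH α S ∧ p ≠ 0 ∧ ∀ q ∈ EH α S, q ≠ 0 → q * p = q → q = p}

/-- The groupoid `H = {t·e | t ∈ H', e ∈ H⁽⁰⁾} \ {0}` associated to `H'`. -/
def Hgpd : Set (F α) :=
  {x | x ≠ 0 ∧ ∃ t ∈ S, ∃ e ∈ H0 α S, x = ιG α t * e}

/-- `G_H = {g·e | g ∈ G, e ∈ H⁽⁰⁾, g* g ≥ e} \ {0}`. -/
def GH : Set (F α) :=
  {x | x ≠ 0 ∧ ∃ (g : G), ∃ e ∈ H0 α S, x = ιG α g * e ∧ e * ιG α (star g * g) = e}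

/-- The relation `≡` on `G_H`: `g ≡ h` iff `g t = h` for some `t ∈ H`. -/
def equivH (x y : F α) : Prop := ∃ t ∈ Hgpd α S, x * t = y

end GAlgebra

/-- For an assertion `P`, the scalar `[P]` which is `1` if `P` is true and `0` if `P`
is false. -/
def ind (P : Prop) : ℂ := @ite _ P (Classical.propDecidable P) 1 0

end Green

namespace Green

section InvSemigroupLemmas

variable {G : Type*} [InverseSemigroup G]

lemma isg_mss (g : G) : g * star g * g = g := InverseSemigroup.mul_star_mul_self g
lemma isg_sms (g : G) : star g * g * star g = star g :=
  InverseSemigroup.star_mul_self_mul_star g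

lemma isg_star_star (g : G) : star (star g) = g :=
  (InverseSemigroup.star_unique (star g) g (isg_sms g) (isg_mss g)).symm

lemma isg_idem_star {e : G} (he : e * e = e) : star e = e :=
  (InverseSemigroup.star_unique e e (by rw [he, he]) (by rw [he, he])).symm

/-- pointwise absorptions -/
lemma isg_mss' (g : G) (y : G) : g * (star g * (g * y)) = g * y := by
  rw [← mul_assoc, ← mul_assoc, isg_mss]
lemma isg_sms' (g : G) (y : G) : star g * (g * (star g * y)) = star g * y := by
  rw [← mul_assoc, ← mul_assoc, isg_sms]
lemma isg_idem' {e : G} (he : e * e = e) (y : G) : e * (e * y) = e * y := by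
  rw [← mul_assoc, he]

lemma isg_mul_star_idem (g : G) : (g * star g) * (g * star g) = g * star g := by
  rw [mul_assoc g (star g) (g * star g), ← mul_assoc (star g) g (star g), isg_sms]

lemma isg_star_mul_idem (g : G) : (star g * g) * (star g * g) = star g * g := by
  rw [mul_assoc (star g) g (star g * g), ← mul_assoc g (star g) g, isg_mss]

lemma isg_idem_mul {e f : G} (he : e * e = e) (hf : f * f = f) :
    (e * f) * (e * f) = e * f := by
  have h1 : (e * f) * star (e * f) * (e * f) = e * f := isg_mss _
  have h2 : star (e * f) * (e * f) * star (e * f) = star (e * f) := isg_sms _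
  set x := star (e * f) with hx
  have hy : f * x * e = x := by
    apply InverseSemigroup.star_unique
    · -- (e*f) * (f*x*e) * (e*f) = e*f
      have : e * f * (f * x * e) * (e * f) = e * (f * (f * (x * (e * (e * f))))) := by
        simp only [mul_assoc]
      rw [this, isg_idem' hf, isg_idem' he]
      have : e * (f * (x * (e * f))) = e * f * x * (e * f) := by simp only [mul_assoc]
      rw [this, h1]
    · -- (f*x*e) * (e*f) * (f*x*e) = f*x*e
      have : f * x * e * (e * f) * (f * x * e) =
          f * (x * (e * (e * (f * (f * (x * e)))))) := by simp only [mul_assoc]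
      rw [this, isg_idem' he, isg_idem' hf]
      have : f * (x * (e * (f * (x * e)))) = f * ((x * (e * f) * x) * e) := by
        simp only [mul_assoc]
      rw [this, h2, ← mul_assoc]
  have hxx : x * x = x := by
    conv_lhs => rw [← hy]
    have : f * x * e * (f * x * e) = f * ((x * (e * f) * x) * e) := by
      simp only [mul_assoc]
    rw [this, h2, ← mul_assoc, hy]
  have hef : e * f = x := by
    have h3 := isg_idem_star hxx
    rw [hx, isg_star_star] at h3
    exact h3
  rw [← hef] at hxx
  exact hxx

lemma isg_idem_comm {e f : G} (he : e * e = e) (hf : f * f = f) : e * f = f * e := by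
  have hef := isg_idem_mul he hf
  have hfe := isg_idem_mul hf he
  have : f * e = star (e * f) := by
    apply InverseSemigroup.star_unique
    · have : e * f * (f * e) * (e * f) = e * (f * (f * (e * (e * f)))) := by
        simp only [mul_assoc]
      rw [this, isg_idem' hf, isg_idem' he]
      have : e * (f * (e * f)) = (e * f) * (e * f) := by simp only [mul_assoc]
      rw [this, hef]
    · have : f * e * (e * f) * (f * e) = f * (e * (e * (f * (f * e)))) := by
        simp only [mul_assoc]
      rw [this, isg_idem' he, isg_idem' hf]
      have : f * (e * (f * e)) = (f * e) * (f * e) := by simp only [mul_assoc]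
      rw [this, hfe]
  rw [this, isg_idem_star hef]

lemma isg_idem_comm' {e f : G} (he : e * e = e) (hf : f * f = f) (y : G) :
    e * (f * y) = f * (e * y) := by
  rw [← mul_assoc, isg_idem_comm he hf, mul_assoc]

lemma isg_star_mul (g h : G) : star (g * h) = star h * star g := by
  symm
  apply InverseSemigroup.star_unique
  · have : g * h * (star h * star g) * (g * h) =
        g * (h * (star h * (star g * (g * h)))) := by simp only [mul_assoc]
    rw [this, ← mul_assoc (star g) g h, ← mul_assoc h (star h) (star g * g * h),
      ← mul_assoc (h * star h) (star g * g) h,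
      isg_idem_comm (isg_mul_star_idem h) (isg_star_mul_idem g),
      mul_assoc (star g * g) (h * star h) h, isg_mss h,
      mul_assoc (star g) g h, isg_mss']
  · have : star h * star g * (g * h) * (star h * star g) =
        star h * (star g * (g * (h * (star h * star g)))) := by simp only [mul_assoc]
    rw [this, ← mul_assoc h (star h) (star g),
      ← mul_assoc (star g) g ((h * star h) * star g),
      ← mul_assoc (star g * g) (h * star h) (star g),
      isg_idem_comm (isg_star_mul_idem g) (isg_mul_star_idem h),
      mul_assoc (h * star h) (star g * g) (star g), isg_sms g,
      mul_assoc h (star h) (star g), isg_sms']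
lemma isg_conj_idem {u x : G} (hx : x * x = x) :
    (u * x * star u) * (u * x * star u) = u * x * star u := by
  have h1 : u * x * star u * (u * x * star u) =
      u * (x * (star u * (u * (x * star u)))) := by simp only [mul_assoc]
  rw [h1, ← mul_assoc (star u) u (x * star u),
    isg_idem_comm' (isg_star_mul_idem u) hx (star u), isg_sms u, isg_idem' hx,
    ← mul_assoc]

lemma isg_conj_absorb {x u : G} (hx : x * x = x) :
    star u * (u * x * star u) = x * star u := by
  rw [mul_assoc u x (star u), ← mul_assoc (star u) u (x * star u),
    isg_idem_comm' (isg_star_mul_idem u) hx (star u), isg_sms u]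

end InvSemigroupLemmas
section FLemmas
set_option linter.unusedSectionVars false

variable {G : Type*} [InverseSemigroup G]
variable {A : Type*} [NonUnitalNormedRing A] [StarRing A] [CStarRing A] [NormedSpace ℂ A]
  [IsScalarTower ℂ A A] [SMulCommClass ℂ A A] [StarModule ℂ A] [CompleteSpace A]
variable (α : G → A →⋆ₙₐ[ℂ] A)

lemma F_mk_eq (y : FreeStar (A ⊕ G)) :
    RingQuot.mkAlgHom ℂ (Rel α) y = ⟨Quot.mk _ y⟩ := by
  simp only [RingQuot.mkAlgHom_def, RingQuot.mkRingHom_def]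
  rfl

lemma F_star_mk (x : FreeStar (A ⊕ G)) :
    star (RingQuot.mkAlgHom ℂ (Rel α) x) = RingQuot.mkAlgHom ℂ (Rel α) (star x) := by
  rw [F_mk_eq, F_mk_eq]
  rfl

lemma ιG_mul (g h : G) : ιG α (g * h) = ιG α g * ιG α h := by
  rw [ιG, ιG, ιG, ← map_mul]
  exact RingQuot.mkAlgHom_rel ℂ (Rel.mul_G g h)

lemma ιG_star (g : G) : ιG α (star g) = star (ιG α g) := by
  rw [ιG, ιG, RingQuot.mkAlgHom_rel ℂ (Rel.star_G (A := A) g), F_star_mk]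

lemma ιA_mul (x y : A) : ιA α (x * y) = ιA α x * ιA α y := by
  rw [ιA, ιA, ιA, ← map_mul]
  exact RingQuot.mkAlgHom_rel ℂ (Rel.mul_A x y)

lemma ιA_star (x : A) : ιA α (star x) = star (ιA α x) := by
  rw [ιA, ιA, RingQuot.mkAlgHom_rel ℂ (Rel.star_A (G := G) x), F_star_mk]

lemma rel_act (g : G) (x : A) :
    ιA α (α g x) * ιG α g * ιG α (star g) = ιG α g * ιA α x * ιG α (star g) := by
  simpa only [ιA, ιG, map_mul] using RingQuot.mkAlgHom_rel ℂ (Rel.act g x)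

lemma rel_comm (g : G) (x : A) :
    ιG α g * ιG α (star g) * ιA α x = ιA α x * ιG α g * ιG α (star g) := by
  simpa only [ιA, ιG, map_mul] using RingQuot.mkAlgHom_rel ℂ (Rel.comm g x)

lemma idem_commA {d : G} (hd : d * d = d) (x : A) :
    ιG α d * ιA α x = ιA α x * ιG α d := by
  have h := rel_comm α d x
  rw [isg_idem_star hd, mul_assoc (ιA α x), ← ιG_mul, hd] at h
  exact h

lemma idem_act {d : G} (hd : d * d = d) (x : A) :
    ιA α (α d x) * ιG α d = ιA α x * ιG α d := by
  have h := rel_act α d x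
  rw [isg_idem_star hd, mul_assoc (ιA α ((α d) x)), ← ιG_mul, hd] at h
  rw [h, idem_commA α hd x, mul_assoc, ← ιG_mul, hd]

/-- The span of the images of the idempotents of `G` in `𝔽`. -/
def NIdem : Submodule ℂ (F α) :=
  Submodule.span ℂ {x | ∃ d : G, d * d = d ∧ x = ιG α d}

lemma ιG_mem_NIdem {d : G} (hd : d * d = d) : ιG α d ∈ NIdem α :=
  Submodule.subset_span ⟨d, hd, rfl⟩

lemma NIdem_mul {X Y : F α} (hX : X ∈ NIdem α) (hY : Y ∈ NIdem α) :
    X * Y ∈ NIdem α := by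
  induction hX using Submodule.span_induction with
  | mem x hx =>
    induction hY using Submodule.span_induction with
    | mem y hy =>
      obtain ⟨d, hd, rfl⟩ := hx
      obtain ⟨d', hd', rfl⟩ := hy
      rw [← ιG_mul]
      exact ιG_mem_NIdem α (isg_idem_mul hd hd')
    | zero => rw [mul_zero]; exact zero_mem _
    | add y z _ _ hy' hz' => rw [mul_add]; exact add_mem hy' hz'
    | smul c y _ hy' => rw [mul_smul_comm]; exact Submodule.smul_mem _ _ hy'
  | zero => rw [zero_mul]; exact zero_mem _
  | add x z _ _ hx' hz' => rw [add_mul]; exact add_mem hx' hz'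
  | smul c x _ hx' => rw [smul_mul_assoc]; exact Submodule.smul_mem _ _ hx'

lemma NIdem_comm {X Y : F α} (hX : X ∈ NIdem α) (hY : Y ∈ NIdem α) :
    X * Y = Y * X := by
  induction hX using Submodule.span_induction with
  | mem x hx =>
    induction hY using Submodule.span_induction with
    | mem y hy =>
      obtain ⟨d, hd, rfl⟩ := hx
      obtain ⟨d', hd', rfl⟩ := hy
      rw [← ιG_mul, ← ιG_mul, isg_idem_comm hd hd']
    | zero => rw [mul_zero, zero_mul]
    | add y z _ _ hy' hz' => rw [mul_add, add_mul, hy', hz']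
    | smul c y _ hy' => rw [mul_smul_comm, smul_mul_assoc, hy']
  | zero => rw [mul_zero, zero_mul]
  | add x z _ _ hx' hz' => rw [mul_add, add_mul, hx', hz']
  | smul c x _ hx' => rw [mul_smul_comm, smul_mul_assoc, hx']

lemma NIdem_conj {X : F α} (hX : X ∈ NIdem α) (p : G) :
    ιG α p * X * ιG α (star p) ∈ NIdem α := by
  induction hX using Submodule.span_induction with
  | mem x hx =>
    obtain ⟨d, hd, rfl⟩ := hx
    rw [← ιG_mul, ← ιG_mul]
    exact ιG_mem_NIdem α (isg_conj_idem hd)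
  | zero => rw [mul_zero, zero_mul]; exact zero_mem _
  | add x z _ _ hx' hz' => rw [mul_add, add_mul]; exact add_mem hx' hz'
  | smul c x _ hx' =>
    rw [mul_smul_comm, smul_mul_assoc]; exact Submodule.smul_mem _ _ hx'

lemma NIdem_commA {X : F α} (hX : X ∈ NIdem α) (x : A) :
    X * ιA α x = ιA α x * X := by
  induction hX using Submodule.span_induction with
  | mem y hy =>
    obtain ⟨d, hd, rfl⟩ := hy
    exact idem_commA α hd x
  | zero => rw [mul_zero, zero_mul]
  | add y z _ _ hy' hz' => rw [add_mul, mul_add, hy', hz']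
  | smul c y _ hy' => rw [smul_mul_assoc, mul_smul_comm, hy']

end FLemmas
section PLemmas
set_option linter.unusedSectionVars false

variable {G : Type*} [InverseSemigroup G]
variable {A : Type*} [NonUnitalNormedRing A] [StarRing A] [CStarRing A] [NormedSpace ℂ A]
  [IsScalarTower ℂ A A] [SMulCommClass ℂ A A] [StarModule ℂ A] [CompleteSpace A]
variable (α : G → A →⋆ₙₐ[ℂ] A)

lemma elemP_nil (e₀ : G) : elemP α e₀ [] = ιG α e₀ := rfl

lemma elemP_concat (e₀ : G) (l : List G) (e : G) :
    elemP α e₀ (l ++ [e]) = elemP α e₀ l - elemP α e₀ l * ιG α e := by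
  simp [elemP, List.foldl_append]

lemma elemP_mem_NIdem {e₀ : G} (he₀ : e₀ * e₀ = e₀) {l : List G}
    (hl : ∀ e ∈ l, e * e = e) : elemP α e₀ l ∈ NIdem α := by
  induction l using List.reverseRecOn with
  | nil => exact ιG_mem_NIdem α he₀
  | append_singleton l e ih =>
    rw [elemP_concat]
    refine sub_mem (ih ?_) (NIdem_mul α (ih ?_) (ιG_mem_NIdem α ?_)) <;>
      first
        | exact fun x hx => hl x (by simp [hx])
        | exact hl e (by simp)

lemma elemP_mul_ιG {l : List G} (hl : ∀ e ∈ l, e * e = e) (e₀ : G) {f : G}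
    (hf : f * f = f) : elemP α e₀ l * ιG α f = elemP α (e₀ * f) l := by
  induction l using List.reverseRecOn with
  | nil => rw [elemP_nil, elemP_nil, ιG_mul]
  | append_singleton l e ih =>
    have he : e * e = e := hl e (by simp)
    have ih' := ih (fun x hx => hl x (by simp [hx]))
    rw [elemP_concat, elemP_concat, sub_mul, ih', mul_assoc, ← ιG_mul,
      isg_idem_comm he hf, ιG_mul, ← mul_assoc, ih']

lemma elemP_mul_elemP {l : List G} (hl : ∀ e ∈ l, e * e = e) (e₀ : G)
    {f₀ : G} (hf₀ : f₀ * f₀ = f₀) (m : List G) :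
    elemP α e₀ l * elemP α f₀ m = elemP α (e₀ * f₀) (l ++ m) := by
  induction m using List.reverseRecOn with
  | nil => rw [elemP_nil, List.append_nil]; exact elemP_mul_ιG α hl e₀ hf₀
  | append_singleton m e ih =>
    rw [elemP_concat, mul_sub, ih, ← List.append_assoc, elemP_concat, ← mul_assoc, ih]

lemma elemP_idem {e₀ : G} (he₀ : e₀ * e₀ = e₀) {l : List G}
    (hl : ∀ e ∈ l, e * e = e) : elemP α e₀ l * elemP α e₀ l = elemP α e₀ l := by
  induction l using List.reverseRecOn with
  | nil => rw [elemP_nil, ← ιG_mul, he₀]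
  | append_singleton l e ih =>
    have he : e * e = e := hl e (by simp)
    have hl' : ∀ x ∈ l, x * x = x := fun x hx => hl x (by simp [hx])
    have ih' := ih hl'
    have hN := elemP_mem_NIdem α he₀ hl'
    have hcom : ιG α e * elemP α e₀ l = elemP α e₀ l * ιG α e :=
      NIdem_comm α (ιG_mem_NIdem α he) hN
    rw [elemP_concat]
    obtain ⟨X, hX⟩ : ∃ X, elemP α e₀ l = X := ⟨_, rfl⟩
    rw [hX] at ih' hcom ⊢
    have h1 : X * (X * ιG α e) = X * ιG α e := by rw [← mul_assoc X X (ιG α e), ih']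
    have h2 : X * ιG α e * X = X * ιG α e := by
      rw [mul_assoc X (ιG α e) X, hcom, h1]
    have h3 : X * ιG α e * (X * ιG α e) = X * ιG α e := by
      rw [mul_assoc X (ιG α e) (X * ιG α e), ← mul_assoc (ιG α e) X (ιG α e), hcom,
        mul_assoc X (ιG α e) (ιG α e), ← ιG_mul, he, h1]
    rw [sub_mul, mul_sub, mul_sub, ih', h1, h2, h3, sub_self, sub_zero]

lemma elemP_star {e₀ : G} (he₀ : e₀ * e₀ = e₀) {l : List G}
    (hl : ∀ e ∈ l, e * e = e) : star (elemP α e₀ l) = elemP α e₀ l := by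
  induction l using List.reverseRecOn with
  | nil => rw [elemP_nil, ← ιG_star, isg_idem_star he₀]
  | append_singleton l e ih =>
    have he : e * e = e := hl e (by simp)
    have hl' : ∀ x ∈ l, x * x = x := fun x hx => hl x (by simp [hx])
    have hcom : ιG α e * elemP α e₀ l = elemP α e₀ l * ιG α e :=
      NIdem_comm α (ιG_mem_NIdem α he) (elemP_mem_NIdem α he₀ hl')
    rw [elemP_concat, star_sub, star_mul, ih hl', ← ιG_star, isg_idem_star he, hcom]

lemma elemP_conj {l : List G} (hl : ∀ e ∈ l, e * e = e) (e₀ : G) (u : G) :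
    ιG α u * elemP α e₀ l * ιG α (star u) =
      elemP α (u * e₀ * star u) (l.map fun x => u * x * star u) := by
  induction l using List.reverseRecOn with
  | nil => rw [elemP_nil, List.map_nil, elemP_nil, ← ιG_mul, ← ιG_mul]
  | append_singleton l e ih =>
    have he : e * e = e := hl e (by simp)
    have ih' := ih (fun x hx => hl x (by simp [hx]))
    rw [elemP_concat, List.map_append, List.map_cons, List.map_nil, elemP_concat,
      mul_sub, sub_mul, ih']
    congr 1
    rw [mul_assoc (ιG α u) (elemP α e₀ l * ιG α e) (ιG α (star u)),
      mul_assoc (elemP α e₀ l) (ιG α e) (ιG α (star u)), ← ιG_mul,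
      show e * star u = star u * (u * e * star u) from (isg_conj_absorb he).symm,
      ιG_mul, ← mul_assoc, ← mul_assoc, ih']

end PLemmas
lemma mul3_ext {M : Type*} [Semigroup M] {x y z w : M} (h : x * y * z = w) (Y : M) :
    x * (y * (z * Y)) = w * Y := by
  rw [← mul_assoc, ← mul_assoc, h]

section EHLemmas
set_option linter.unusedSectionVars false

variable {G : Type*} [InverseSemigroup G]
variable {A : Type*} [NonUnitalNormedRing A] [StarRing A] [CStarRing A] [NormedSpace ℂ A]
  [IsScalarTower ℂ A A] [SMulCommClass ℂ A A] [StarModule ℂ A] [CompleteSpace A]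
variable (α : G → A →⋆ₙₐ[ℂ] A) (S : Set G)

lemma EH_mem_NIdem {p : F α} (hp : p ∈ EH α S) : p ∈ NIdem α := by
  obtain ⟨e₀, l, ⟨_, he₀⟩, hl, rfl⟩ := hp
  exact elemP_mem_NIdem α he₀ fun e he => (hl e he).2

lemma EH_star {p : F α} (hp : p ∈ EH α S) : star p = p := by
  obtain ⟨e₀, l, ⟨_, he₀⟩, hl, rfl⟩ := hp
  exact elemP_star α he₀ fun e he => (hl e he).2

lemma EH_idem {p : F α} (hp : p ∈ EH α S) : p * p = p := by
  obtain ⟨e₀, l, ⟨_, he₀⟩, hl, rfl⟩ := hp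
  exact elemP_idem α he₀ fun e he => (hl e he).2

lemma EH_comm {p q : F α} (hp : p ∈ EH α S) (hq : q ∈ EH α S) : p * q = q * p :=
  NIdem_comm α (EH_mem_NIdem α S hp) (EH_mem_NIdem α S hq)

lemma EH_mul (hS : IsSubInvSemigroup S) {p q : F α} (hp : p ∈ EH α S)
    (hq : q ∈ EH α S) : p * q ∈ EH α S := by
  obtain ⟨e₀, l, ⟨he₀S, he₀⟩, hl, rfl⟩ := hp
  obtain ⟨f₀, m, ⟨hf₀S, hf₀⟩, hm, rfl⟩ := hq
  refine ⟨e₀ * f₀, l ++ m, ⟨hS.mul_mem he₀S hf₀S, isg_idem_mul he₀ hf₀⟩, ?_, ?_⟩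
  · intro e he
    rcases List.mem_append.mp he with h | h
    exacts [hl e h, hm e h]
  · exact elemP_mul_elemP α (fun e he => (hl e he).2) e₀ hf₀ m

lemma ιG_mem_EH {d : G} (hd : d ∈ S) (hdi : d * d = d) : ιG α d ∈ EH α S :=
  ⟨d, [], ⟨hd, hdi⟩, by simp, rfl⟩

lemma EH_conj (hS : IsSubInvSemigroup S) {u : G} (hu : u ∈ S) {p : F α}
    (hp : p ∈ EH α S) : ιG α u * p * ιG α (star u) ∈ EH α S := by
  obtain ⟨e₀, l, ⟨he₀S, he₀⟩, hl, rfl⟩ := hp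
  refine ⟨u * e₀ * star u, l.map fun x => u * x * star u,
    ⟨hS.mul_mem (hS.mul_mem hu he₀S) (hS.star_mem hu), isg_conj_idem he₀⟩, ?_, ?_⟩
  · intro e he
    obtain ⟨x, hx, rfl⟩ := List.mem_map.mp he
    exact ⟨hS.mul_mem (hS.mul_mem hu (hl x hx).1) (hS.star_mem hu),
      isg_conj_idem (hl x hx).2⟩
  · exact elemP_conj α (fun e he => (hl e he).2) e₀ u

lemma H0_min (hS : IsSubInvSemigroup S) {e : F α} (he : e ∈ H0 α S) {q : F α}
    (hq : q ∈ EH α S) : e * q = 0 ∨ e * q = e := by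
  by_cases h : e * q = 0
  · exact Or.inl h
  · refine Or.inr (he.2.2 (e * q) (EH_mul α S hS he.1 hq) h ?_)
    rw [mul_assoc, EH_comm α S hq he.1, ← mul_assoc, EH_idem α S he.1]

lemma H0_eq (hS : IsSubInvSemigroup S) {e f : F α} (he : e ∈ H0 α S)
    (hf : f ∈ H0 α S) (hef : e * f ≠ 0) : e = f := by
  have h1 : e * f = e := (H0_min α S hS he hf.1).resolve_left hef
  have h2 : f * e = f := by
    refine (H0_min α S hS hf he.1).resolve_left ?_
    rw [EH_comm α S hf.1 he.1]
    exact hef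
  rw [← h1, EH_comm α S he.1 hf.1]
  exact h2

lemma Hgpd_struct (hS : IsSubInvSemigroup S) {t : F α} (ht : t ∈ Hgpd α S) :
    ∃ u ∈ S, ∃ f ∈ H0 α S, t = ιG α u * f ∧ f * ιG α (star u * u) = f ∧
      star t * t = f := by
  obtain ⟨htne, u, huS, f, hf, rfl⟩ := ht
  have hEH : ιG α (star u * u) ∈ EH α S :=
    ιG_mem_EH α S (hS.mul_mem (hS.star_mem huS) huS) (isg_star_mul_idem u)
  have hkey : ιG α u * f = ιG α u * (f * ιG α (star u * u)) := by
    conv_lhs => rw [show u = u * (star u * u) by rw [← mul_assoc, isg_mss]]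
    rw [ιG_mul, mul_assoc, EH_comm α S hEH hf.1]
  have habs : f * ιG α (star u * u) = f := by
    rcases H0_min α S hS hf hEH with h0 | h1
    · exact absurd (by rw [hkey, h0, mul_zero]) htne
    · exact h1
  refine ⟨u, huS, f, hf, rfl, habs, ?_⟩
  rw [star_mul, ← ιG_star, EH_star α S hf.1, mul_assoc, ← mul_assoc (ιG α (star u)),
    ← ιG_mul, ← mul_assoc, habs, EH_idem α S hf.1]

lemma GH_struct (hS : IsSubInvSemigroup S) {x₁ : G} {e : F α} (he : e ∈ H0 α S)
    (hx : ιG α x₁ * e ∈ GH α S) :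
    e * ιG α (star x₁ * x₁) = e ∧ star (ιG α x₁ * e) * (ιG α x₁ * e) = e := by
  obtain ⟨hne, m, e'', he'', hrep, habs⟩ := hx
  have hx_e : (ιG α x₁ * e) * e'' = ιG α x₁ * e := by
    rw [hrep, mul_assoc, EH_idem α S he''.1]
  have hee : e * e'' ≠ 0 := by
    intro h0
    apply hne
    rw [← hx_e, mul_assoc, h0, mul_zero]
  have heq : e = e'' := H0_eq α S hS he he'' hee
  have h1 : star (ιG α x₁ * e) * (ιG α x₁ * e) = e := by
    rw [hrep, star_mul, ← ιG_star, EH_star α S he''.1,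
      mul_assoc e'' (ιG α (star m)) (ιG α m * e''),
      ← mul_assoc (ιG α (star m)) (ιG α m) e'', ← ιG_mul, ← mul_assoc, habs,
      EH_idem α S he''.1, ← heq]
  constructor
  · have h2 : star (ιG α x₁ * e) * (ιG α x₁ * e) =
        e * ιG α (star x₁ * x₁) * e := by
      rw [star_mul, ← ιG_star, EH_star α S he.1, mul_assoc,
        ← mul_assoc (ιG α (star x₁)), ← ιG_mul, ← mul_assoc]
    have h3 := h2.symm.trans h1
    have hcom : e * ιG α (star x₁ * x₁) = ιG α (star x₁ * x₁) * e :=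
      NIdem_comm α (EH_mem_NIdem α S he.1) (ιG_mem_NIdem α (isg_star_mul_idem x₁))
    rw [hcom, mul_assoc] at h3
    rw [hcom]
    calc ιG α (star x₁ * x₁) * e = ιG α (star x₁ * x₁) * (e * e) := by
          rw [EH_idem α S he.1]
      _ = e := h3
  · exact h1

end EHLemmas
section ClaimC
set_option linter.unusedSectionVars false

variable {G : Type*} [InverseSemigroup G]
variable {A : Type*} [NonUnitalNormedRing A] [StarRing A] [CStarRing A] [NormedSpace ℂ A]
  [IsScalarTower ℂ A A] [SMulCommClass ℂ A A] [StarModule ℂ A] [CompleteSpace A]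
variable (α : G → A →⋆ₙₐ[ℂ] A)

/-- The key rigidity lemma: two "partial-isometry"-like elements `ι p * e`, `ι q * e`
with the same source projection `e` and full mutual overlap are equal. -/
lemma claimC {p q : G} {e : F α} (heN : e ∈ NIdem α) (hes : star e = e)
    (h1 : e * ιG α (star p * p) * e = e) (h3 : e * ιG α (star p * q) * e = e) :
    ιG α p * e = ιG α q * e := by
  have h1' : ∀ Y, e * (ιG α (star p * p) * (e * Y)) = e * Y := fun Y => mul3_ext h1 Y
  have h3m : e * (ιG α (star p * q) * e) = e := by rw [← mul_assoc]; exact h3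
  have h4 : e * ιG α (star q * p) * e = e := by
    have hst := congrArg star h3
    rw [star_mul, star_mul, hes, ← ιG_star, isg_star_mul, isg_star_star,
      ← mul_assoc] at hst
    exact hst
  have h4m : e * (ιG α (star q * p) * e) = e := by rw [← mul_assoc]; exact h4
  set v := ιG α p * e with hv
  set w := ιG α q * e with hw
  set aa := ιG α p * e * ιG α (star p) with ha
  set bb := ιG α q * e * ιG α (star q) with hb
  have haN : aa ∈ NIdem α := NIdem_conj α heN p
  have hbN : bb ∈ NIdem α := NIdem_conj α heN q
  have hab : aa * bb = bb * aa := NIdem_comm α haN hbN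
  have haa : aa * aa = aa := by
    rw [ha]
    calc ιG α p * e * ιG α (star p) * (ιG α p * e * ιG α (star p))
        = ιG α p * (e * (ιG α (star p) * (ιG α p * (e * ιG α (star p))))) := by
          simp only [mul_assoc]
      _ = ιG α p * (e * (ιG α (star p * p) * (e * ιG α (star p)))) := by
          rw [← mul_assoc (ιG α (star p)) (ιG α p), ← ιG_mul]
      _ = ιG α p * (e * ιG α (star p)) := by rw [h1']
      _ = ιG α p * e * ιG α (star p) := by rw [mul_assoc]
  have hav : aa * w = v := by
    rw [ha, hw, hv]
    calc ιG α p * e * ιG α (star p) * (ιG α q * e)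
        = ιG α p * (e * (ιG α (star p) * (ιG α q * e))) := by simp only [mul_assoc]
      _ = ιG α p * (e * (ιG α (star p * q) * e)) := by
          rw [← mul_assoc (ιG α (star p)) (ιG α q) e, ← ιG_mul]
      _ = ιG α p * e := by rw [h3m]
  have hbv : bb * v = w := by
    rw [hb, hw, hv]
    calc ιG α q * e * ιG α (star q) * (ιG α p * e)
        = ιG α q * (e * (ιG α (star q) * (ιG α p * e))) := by simp only [mul_assoc]
      _ = ιG α q * (e * (ιG α (star q * p) * e)) := by
          rw [← mul_assoc (ιG α (star q)) (ιG α p) e, ← ιG_mul]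
      _ = ιG α q * e := by rw [h4m]
  have hwba : w = bb * (aa * w) := by rw [hav, hbv]
  have haw : aa * w = w := by
    calc aa * w = aa * (bb * (aa * w)) := by conv_lhs => rw [hwba]
      _ = ((aa * bb) * aa) * w := by simp only [mul_assoc]
      _ = ((bb * aa) * aa) * w := by rw [hab]
      _ = (bb * aa) * w := by rw [mul_assoc bb aa aa, haa]
      _ = bb * (aa * w) := by rw [mul_assoc]
      _ = w := hwba.symm
  rw [← hav]
  exact haw

end ClaimC
section StepA
set_option linter.unusedSectionVars false

variable {G : Type*} [InverseSemigroup G]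
variable {A : Type*} [NonUnitalNormedRing A] [StarRing A] [CStarRing A] [NormedSpace ℂ A]
  [IsScalarTower ℂ A A] [SMulCommClass ℂ A A] [StarModule ℂ A] [CompleteSpace A]
variable (α : G → A →⋆ₙₐ[ℂ] A)

lemma ind_pos {P : Prop} (h : P) : ind P = 1 := by simp [ind, h]
lemma ind_neg {P : Prop} (h : ¬P) : ind P = 0 := by simp [ind, h]

lemma alpha_comm_idem (hα : IsGAlgebra α) {d m : G} (hd : d * d = d) (hm : m * m = m)
    (x : A) : α d (α m x) = α m (α d x) := by
  have h1 : α (d * m) x = α d (α m x) := by rw [hα.map_mul]; rfl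
  have h2 : α (m * d) x = α m (α d x) := by rw [hα.map_mul]; rfl
  rw [← h1, ← h2, isg_idem_comm hd hm]

lemma actL_alpha (hα : IsGAlgebra α) {L : List G} (hL : ∀ e ∈ L, e * e = e)
    {m : G} (hm : m * m = m) (x : A) :
    actL α L (α m x) = α m (actL α L x) := by
  induction L with
  | nil => rfl
  | cons e L ih =>
    have he : e * e = e := hL e (by simp)
    have ih' := ih (fun x hx => hL x (by simp [hx]))
    show actL α L (α m x) - α e (actL α L (α m x)) =
      α m (actL α L x - α e (actL α L x))
    rw [ih', alpha_comm_idem α hα he hm, map_sub]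

lemma actStar_alpha (hα : IsGAlgebra α) (g e₀ : G) {l : List G}
    (he₀ : e₀ * e₀ = e₀) (hl : ∀ e ∈ l, e * e = e) {m : G} (hm : m * m = m) (x : A) :
    actStar α g e₀ l (α m x) = α (star g * m)
      (α (g * e₀ * star g) (actL α (l.map fun e => g * e * star g) x)) := by
  have hL : ∀ e ∈ l.map (fun e => g * e * star g), e * e = e := by
    intro e he
    obtain ⟨x, hx, rfl⟩ := List.mem_map.mp he
    exact isg_conj_idem (hl x hx)
  have hco : ∀ y : A, α (star g * m) y = α (star g) (α m y) := fun y => by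
    rw [hα.map_mul]; rfl
  show α (star g) (α (g * e₀ * star g) (actL α _ (α m x))) = _
  rw [actL_alpha α hα hL hm, alpha_comm_idem α hα (isg_conj_idem he₀) hm, hco]

lemma actStar_eq (g e₀ : G) (l : List G) (x : A) :
    actStar α g e₀ l x =
      α (star g) (α (g * e₀ * star g) (actL α (l.map fun e => g * e * star g) x)) :=
  rfl

lemma ιG_mul_assoc (x y : G) (Z : F α) :
    ιG α x * (ιG α y * Z) = ιG α (x * y) * Z := by
  rw [← mul_assoc, ← ιG_mul]

lemma keyA (g s : G) (W : A) :
    ιA α (α (star g * (star s * s)) W) * ιG α (star g * star s)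
      = ιA α (α (star g) W) * ιG α (star g * star s) := by
  have hm : (star s * s) * (star s * s) = star s * s := isg_star_mul_idem s
  have hgsg : (g * star g) * (g * star g) = g * star g := isg_mul_star_idem g
  have hτstar : star (star g * (star s * s)) = star s * s * g := by
    rw [isg_star_mul, isg_star_star, isg_idem_star hm]
  have hd : star s * (s * (g * (star g * star s))) = g * (star g * star s) := by
    rw [← mul_assoc (star s) s (g * (star g * star s)),
      ← mul_assoc g (star g) (star s), isg_idem_comm' hm hgsg (star s), isg_sms s,
      mul_assoc]
  have hc1 : (star g * (star s * s)) * ((star s * s) * g * (star g * star s)) =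
      star g * star s := by
    have h : (star g * (star s * s)) * ((star s * s) * g * (star g * star s)) =
        star g * (star s * (s * (star s * (s * (g * (star g * star s)))))) := by
      simp only [mul_assoc]
    rw [h, hd, hd, isg_sms']
  have hc4 : star g * (g * (star g * star s)) = star g * star s := isg_sms' g (star s)
  have hrw1 : ιG α (star g * star s) =
      ιG α (star g * (star s * s)) *
        (ιG α (star (star g * (star s * s))) * ιG α (star g * star s)) := by
    rw [hτstar, ← ιG_mul, ← ιG_mul, hc1]
  have hrw2 : ιG α (star g * star s) =
      ιG α (star g) * (ιG α (star (star g)) * ιG α (star g * star s)) := by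
    rw [isg_star_star, ← ιG_mul, ← ιG_mul, hc4]
  calc ιA α (α (star g * (star s * s)) W) * ιG α (star g * star s)
      = ιA α (α (star g * (star s * s)) W) * ιG α (star g * (star s * s)) *
          ιG α (star (star g * (star s * s))) * ιG α (star g * star s) := by
        conv_lhs => rw [hrw1]
        simp only [mul_assoc]
    _ = ιG α (star g * (star s * s)) * ιA α W * ιG α (star (star g * (star s * s))) *
          ιG α (star g * star s) := by rw [rel_act]
    _ = ιG α (star g) * (ιG α (star s * s) * ιA α W) *
          (ιG α ((star s * s) * g) * ιG α (star g * star s)) := by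
        rw [hτstar, ιG_mul α (star g) (star s * s)]
        simp only [mul_assoc]
    _ = ιG α (star g) * (ιA α W * ιG α (star s * s)) *
          ιG α ((star s * s) * g * (star g * star s)) := by
        rw [idem_commA α hm W, ← ιG_mul α ((star s * s) * g) (star g * star s)]
    _ = ιG α (star g) * ιA α W *
          ιG α ((star s * s) * ((star s * s) * g * (star g * star s))) := by
        simp only [mul_assoc]
        rw [← ιG_mul α (star s * s) (star s * (s * (g * (star g * star s))))]
        simp only [mul_assoc]
    _ = ιG α (star g) * ιA α W * ιG α (g * (star g * star s)) := by
        simp only [mul_assoc]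
        rw [hd, hd]
    _ = ιA α (α (star g) W) * ιG α (star g * star s) := by
        have hra := rel_act α (star g) W
        rw [isg_star_star] at hra
        conv_rhs => rw [hrw2, isg_star_star]
        rw [ιG_mul α g (star g * star s), ← mul_assoc, ← hra]
        simp only [mul_assoc]

lemma stepA_general (hα : IsGAlgebra α) {eP : F α} (hePN : eP ∈ NIdem α)
    (g s : G) (W : A) (R : F α) :
    ιA α (α (star g * (star s * s)) W) * (eP * ιG α (star g) * ιG α (star s) * R)
      = ιA α (α (star g) W) * (eP * ιG α (star g) * ιG α (star s) * R) := by
  have h : ∀ (x : A), ιA α x * (eP * ιG α (star g) * ιG α (star s) * R) =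
      eP * (ιA α x * ιG α (star g * star s) * R) := by
    intro x
    rw [ιG_mul]
    calc ιA α x * (eP * ιG α (star g) * ιG α (star s) * R)
        = ιA α x * (eP * (ιG α (star g) * (ιG α (star s) * R))) := by
          simp only [mul_assoc]
      _ = eP * (ιA α x * (ιG α (star g) * (ιG α (star s) * R))) := by
          rw [← mul_assoc, ← NIdem_commA α hePN x, mul_assoc]
      _ = eP * (ιA α x * (ιG α (star g) * ιG α (star s)) * R) := by
          simp only [mul_assoc]
  rw [h, h, keyA]

lemma inp_eq (hα : IsGAlgebra α) (s : G) (a b c : A) :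
    α (star s) (α s (star b) * star a * c) =
      α (star s * s) (star b * α (star s) (star a) * α (star s) c) := by
  have h1 : ∀ x : A, α (star s) (α s x) = α (star s * s) x := fun x => by
    rw [hα.map_mul]; rfl
  have h2 : ∀ x : A, α (star s * s) (α (star s) x) = α (star s) x := by
    intro x
    have h := hα.map_mul (star s * s) (star s)
    rw [isg_sms s] at h
    conv_rhs => rw [h]
    rfl
  rw [map_mul, map_mul, map_mul, map_mul, h1, h2, h2]

lemma star_elemGE {e₀ : G} (he₀ : e₀ * e₀ = e₀) {l : List G}
    (hl : ∀ e ∈ l, e * e = e) (g : G) :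
    star (elemGE α g e₀ l) = elemP α e₀ l * ιG α (star g) := by
  rw [elemGE, star_mul, ← ιG_star, elemP_star α he₀ hl]

lemma isg_nabs (x s : G) : x * (star x * (s * (star s * x))) = s * (star s * x) := by
  rw [← mul_assoc x (star x), ← mul_assoc s (star s) x,
    isg_idem_comm' (isg_mul_star_idem x) (isg_mul_star_idem s) x, isg_mss x, mul_assoc]

end StepA


/-- The identity of the expressions (x4) and (x5) in the proof of
`⟨f x, y⟩_{B₀} = ⟨x, f* y⟩_{B₀}` on standard elements:  for all `a, b, c ∈ A`, all
`r, g, h ∈ G_H` (given by representations) and all `s ∈ G`,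
`[s g ∈ G_H]·[r ≡ s g]·[g* s* h ∈ H] · α_{g*}(α_{s*}(α_s(b*)·a*·c)) · (g* s* h)
  = [g* s* h ∈ H]·[s* r ∈ G_H]·[s* h ∈ G_H]·[s* r ≡ s* h] ·
      α_{g*}(b*·α_{s*}(a*)·α_{s*}(c)) · (g* s* h)` in `𝔽(G,A)`. -/
theorem x4_eq_x5
    {G : Type*} [InverseSemigroup G]
    {A : Type*} [NonUnitalNormedRing A] [StarRing A] [CStarRing A] [NormedSpace ℂ A]
    [IsScalarTower ℂ A A] [SMulCommClass ℂ A A] [StarModule ℂ A] [CompleteSpace A]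
    (α : G → A →⋆ₙₐ[ℂ] A) (hα : IsGAlgebra α)
    (S : Set G) (hS : IsSubInvSemigroup S) (hSfin : S.Finite)
    (a b c : A)
    (rg re₀ : G) (rl : List G) (hre : re₀ * re₀ = re₀) (hrl : ∀ e ∈ rl, e * e = e)
    (hrH0 : elemP α re₀ rl ∈ H0 α S) (hrGH : elemGE α rg re₀ rl ∈ GH α S)
    (gg ge₀ : G) (gl : List G) (hge : ge₀ * ge₀ = ge₀) (hgl : ∀ e ∈ gl, e * e = e)
    (hgH0 : elemP α ge₀ gl ∈ H0 α S) (hgGH : elemGE α gg ge₀ gl ∈ GH α S)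
    (hg he₀ : G) (lh : List G) (hhe : he₀ * he₀ = he₀) (hlh : ∀ e ∈ lh, e * e = e)
    (hhH0 : elemP α he₀ lh ∈ H0 α S) (hhGH : elemGE α hg he₀ lh ∈ GH α S)
    (s : G) :
    (ind (ιG α s * elemGE α gg ge₀ gl ∈ GH α S) *
     ind (equivH α S (elemGE α rg re₀ rl) (ιG α s * elemGE α gg ge₀ gl)) *
     ind (star (elemGE α gg ge₀ gl) * ιG α (star s) * elemGE α hg he₀ lh ∈ Hgpd α S)) •
      (ιA α (actStar α gg ge₀ gl (α (star s) (α s (star b) * star a * c))) *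
        (star (elemGE α gg ge₀ gl) * ιG α (star s) * elemGE α hg he₀ lh))
    = (ind (star (elemGE α gg ge₀ gl) * ιG α (star s) * elemGE α hg he₀ lh ∈ Hgpd α S) *
       ind (ιG α (star s) * elemGE α rg re₀ rl ∈ GH α S) *
       ind (ιG α (star s) * elemGE α hg he₀ lh ∈ GH α S) *
       ind (equivH α S (ιG α (star s) * elemGE α rg re₀ rl)
             (ιG α (star s) * elemGE α hg he₀ lh))) •
      (ιA α (actStar α gg ge₀ gl (star b * α (star s) (star a) * α (star s) c)) *
        (star (elemGE α gg ge₀ gl) * ιG α (star s) * elemGE α hg he₀ lh)) := by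
  classical
  have hkne : elemGE α gg ge₀ gl ≠ 0 := hgGH.1
  have hrne : elemGE α rg re₀ rl ≠ 0 := hrGH.1
  have hhne : elemGE α hg he₀ lh ≠ 0 := hhGH.1
  have hkdef : elemGE α gg ge₀ gl = ιG α gg * elemP α ge₀ gl := rfl
  have hrdef : elemGE α rg re₀ rl = ιG α rg * elemP α re₀ rl := rfl
  have hhdef : elemGE α hg he₀ lh = ιG α hg * elemP α he₀ lh := rfl
  obtain ⟨hg_abs, hg_ss⟩ := GH_struct α S hS hgH0 (hkdef ▸ hgGH)
  obtain ⟨hr_abs, hr_ss⟩ := GH_struct α S hS hrH0 (hrdef ▸ hrGH)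
  obtain ⟨hh_abs, hh_ss⟩ := GH_struct α S hS hhH0 (hhdef ▸ hhGH)
  -- Step A : the two element parts agree
  have hstar_k : star (elemGE α gg ge₀ gl) = elemP α ge₀ gl * ιG α (star gg) :=
    star_elemGE α hge hgl gg
  have hePN : elemP α ge₀ gl ∈ NIdem α := elemP_mem_NIdem α hge hgl
  have hms : (star s * s) * (star s * s) = star s * s := isg_star_mul_idem s
  have hE : ιA α (actStar α gg ge₀ gl (α (star s) (α s (star b) * star a * c))) *
      (star (elemGE α gg ge₀ gl) * ιG α (star s) * elemGE α hg he₀ lh)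
      = ιA α (actStar α gg ge₀ gl (star b * α (star s) (star a) * α (star s) c)) *
      (star (elemGE α gg ge₀ gl) * ιG α (star s) * elemGE α hg he₀ lh) := by
    rw [inp_eq α hα s a b c, actStar_alpha α hα gg ge₀ hge hgl hms, hstar_k,
      actStar_eq]
    exact stepA_general α hα hePN gg s _ _
  rw [hE]
  -- it remains to identify the two scalars
  congr 1
  by_cases hT : star (elemGE α gg ge₀ gl) * ιG α (star s) * elemGE α hg he₀ lh
      ∈ Hgpd α S
  swap
  · rw [ind_neg hT]; ring
  · set er := elemP α re₀ rl with her_def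
    set eg := elemP α ge₀ gl with heg_def
    set eh := elemP α he₀ lh with heh_def
    set tF := star (elemGE α gg ge₀ gl) * ιG α (star s) * elemGE α hg he₀ lh
      with htF_def
    have hn_eq : star (star s * hg) * (star s * hg) =
        star hg * (s * (star s * hg)) := by
      rw [isg_star_mul, isg_star_star, mul_assoc]
    have hn_idem : (star hg * (s * (star s * hg))) * (star hg * (s * (star s * hg)))
        = star hg * (s * (star s * hg)) := by
      rw [← hn_eq]; exact isg_star_mul_idem _
    have hn'_eq : star (s * gg) * (s * gg) = star gg * (star s * (s * gg)) := by
      rw [isg_star_mul, mul_assoc]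
    have hn'_idem : (star gg * (star s * (s * gg))) * (star gg * (star s * (s * gg)))
        = star gg * (star s * (s * gg)) := by
      rw [← hn'_eq]; exact isg_star_mul_idem _
    have hnr_eq : star (star s * rg) * (star s * rg) =
        star rg * (s * (star s * rg)) := by
      rw [isg_star_mul, isg_star_star, mul_assoc]
    have hnr_idem : (star rg * (s * (star s * rg))) * (star rg * (s * (star s * rg)))
        = star rg * (s * (star s * rg)) := by
      rw [← hnr_eq]; exact isg_star_mul_idem _
    have hT_form : tF = eg * (ιG α (star gg * (star s * hg)) * eh) := by
      rw [htF_def, hstar_k, hhdef]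
      simp only [mul_assoc]
      rw [ιG_mul_assoc α (star s) hg eh, ιG_mul_assoc α (star gg) (star s * hg) eh]
    obtain ⟨u, huS, f, hf, htf, hfabs0, htt0⟩ := Hgpd_struct α S hS hT
    have hteh : tF * eh = tF := by
      rw [hT_form, mul_assoc, mul_assoc, EH_idem α S hhH0.1]
    have hfeh : f * eh = f := by rw [← htt0, mul_assoc, hteh]
    have hfeq : f = eh := H0_eq α S hS hf hhH0 (by rw [hfeh]; exact hf.2.1)
    rw [hfeq] at htf hfabs0 htt0
    have htne : tF ≠ 0 := hT.1
    have heg_t : eg * tF = tF := by rw [hT_form, ← mul_assoc, EH_idem α S hgH0.1]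
    have hstar_t : star tF = eh * ιG α (star u) := by
      rw [htf, star_mul, ← ιG_star, EH_star α S hhH0.1]
    have htts_eq : tF * star tF = ιG α u * eh * ιG α (star u) := by
      rw [hstar_t, htf, mul_assoc (ιG α u) eh (eh * ιG α (star u)),
        ← mul_assoc eh eh (ιG α (star u)), EH_idem α S hhH0.1, ← mul_assoc]
    have httEH : tF * star tF ∈ EH α S := by
      rw [htts_eq]; exact EH_conj α S hS huS hhH0.1
    have httne : tF * star tF ≠ 0 := by
      intro h0
      apply htne
      have hh : tF * (star tF * tF) = tF := by rw [htt0, hteh]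
      rw [← hh, ← mul_assoc, h0, zero_mul]
    have htt_eg : tF * star tF = eg :=
      hgH0.2.2 _ httEH httne
        (by rw [EH_comm α S httEH hgH0.1, ← mul_assoc, heg_t])
    have hMn : (star gg * (star s * hg)) * (star hg * (s * (star s * hg))) =
        star gg * (star s * hg) := by
      simp only [mul_assoc]
      rw [isg_nabs hg s, isg_sms' s hg]
    have htn : tF * ιG α (star hg * (s * (star s * hg))) = tF := by
      rw [hT_form]
      calc eg * (ιG α (star gg * (star s * hg)) * eh) *
            ιG α (star hg * (s * (star s * hg)))
          = eg * (ιG α (star gg * (star s * hg)) *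
              (eh * ιG α (star hg * (s * (star s * hg))))) := by
            simp only [mul_assoc]
        _ = eg * (ιG α (star gg * (star s * hg)) *
              (ιG α (star hg * (s * (star s * hg))) * eh)) := by
            rw [NIdem_comm α (EH_mem_NIdem α S hhH0.1) (ιG_mem_NIdem α hn_idem)]
        _ = eg * (ιG α ((star gg * (star s * hg)) * (star hg * (s * (star s * hg))))
              * eh) := by rw [ιG_mul_assoc]
        _ = eg * (ιG α (star gg * (star s * hg)) * eh) := by rw [hMn]
    have habs_h : eh * ιG α (star hg * (s * (star s * hg))) = eh := by
      rw [← htt0, mul_assoc, htn]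
    have hstar_M : star (star gg * (star s * hg)) = star hg * (s * gg) := by
      rw [isg_star_mul, isg_star_mul, isg_star_star, isg_star_star, mul_assoc]
    have hTS_form : star tF = eh * (ιG α (star hg * (s * gg)) * eg) := by
      rw [hT_form, star_mul, star_mul, ← ιG_star, EH_star α S hgH0.1,
        EH_star α S hhH0.1, hstar_M, mul_assoc]
    have hM'n' : (star hg * (s * gg)) * (star gg * (star s * (s * gg))) =
        star hg * (s * gg) := by
      have h := isg_nabs gg (star s)
      rw [isg_star_star] at h
      simp only [mul_assoc]
      rw [h, isg_mss' s gg]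
    have htsn' : star tF * ιG α (star gg * (star s * (s * gg))) = star tF := by
      rw [hTS_form]
      calc eh * (ιG α (star hg * (s * gg)) * eg) *
            ιG α (star gg * (star s * (s * gg)))
          = eh * (ιG α (star hg * (s * gg)) *
              (eg * ιG α (star gg * (star s * (s * gg))))) := by
            simp only [mul_assoc]
        _ = eh * (ιG α (star hg * (s * gg)) *
              (ιG α (star gg * (star s * (s * gg))) * eg)) := by
            rw [NIdem_comm α (EH_mem_NIdem α S hgH0.1) (ιG_mem_NIdem α hn'_idem)]
        _ = eh * (ιG α ((star hg * (s * gg)) * (star gg * (star s * (s * gg)))) * eg)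
            := by rw [ιG_mul_assoc]
        _ = eh * (ιG α (star hg * (s * gg)) * eg) := by rw [hM'n']
    have habs_g : eg * ιG α (star gg * (star s * (s * gg))) = eg := by
      rw [← htt_eg, mul_assoc, htsn']
    -- P₁ holds
    have hsk_form : ιG α s * elemGE α gg ge₀ gl = ιG α (s * gg) * eg := by
      rw [hkdef, ιG_mul_assoc]
    have hgg_n' : gg * (star gg * (star s * (s * gg))) = star s * (s * gg) := by
      have h := isg_nabs gg (star s)
      rw [isg_star_star] at h
      exact h
    have hssk : ιG α (star s) * (ιG α (s * gg) * eg) = ιG α gg * eg := by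
      rw [ιG_mul_assoc, ← hgg_n', ← ιG_mul_assoc α gg _ eg,
        NIdem_comm α (ιG_mem_NIdem α hn'_idem) (EH_mem_NIdem α S hgH0.1), habs_g]
    have hskne : ιG α s * elemGE α gg ge₀ gl ≠ 0 := by
      intro h0
      apply hkne
      have h1 : ιG α (star s) * (ιG α s * elemGE α gg ge₀ gl) =
          elemGE α gg ge₀ gl := by rw [hsk_form, hssk, ← hkdef]
      rw [← h1, h0, mul_zero]
    have hP₁ : ιG α s * elemGE α gg ge₀ gl ∈ GH α S :=
      ⟨hskne, s * gg, eg, hgH0, hsk_form, by rw [hn'_eq, habs_g]⟩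
    -- Q₂ holds
    have hsh_form : ιG α (star s) * elemGE α hg he₀ lh = ιG α (star s * hg) * eh := by
      rw [hhdef, ιG_mul_assoc]
    have hhg_n : hg * (star hg * (s * (star s * hg))) = s * (star s * hg) :=
      isg_nabs hg s
    have hssh : ιG α s * (ιG α (star s * hg) * eh) = ιG α hg * eh := by
      rw [ιG_mul_assoc, ← hhg_n, ← ιG_mul_assoc α hg _ eh,
        NIdem_comm α (ιG_mem_NIdem α hn_idem) (EH_mem_NIdem α S hhH0.1), habs_h]
    have hshne : ιG α (star s) * elemGE α hg he₀ lh ≠ 0 := by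
      intro h0
      apply hhne
      have h1 : ιG α s * (ιG α (star s) * elemGE α hg he₀ lh) =
          elemGE α hg he₀ lh := by rw [hsh_form, hssh, ← hhdef]
      rw [← h1, h0, mul_zero]
    have hQ₂ : ιG α (star s) * elemGE α hg he₀ lh ∈ GH α S :=
      ⟨hshne, star s * hg, eh, hhH0, hsh_form, by rw [hn_eq, habs_h]⟩
    -- z = y via the rigidity lemma
    have hz : elemGE α gg ge₀ gl * tF = ιG α (gg * u) * eh := by
      rw [hkdef, mul_assoc, heg_t, htf, ιG_mul_assoc]
    have hkk : star (elemGE α gg ge₀ gl) * elemGE α gg ge₀ gl = eg := by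
      rw [hkdef]; exact hg_ss
    have hzz : star (ιG α (gg * u) * eh) * (ιG α (gg * u) * eh) = eh := by
      rw [← hz, star_mul,
        mul_assoc (star tF) (star (elemGE α gg ge₀ gl)) (elemGE α gg ge₀ gl * tF),
        ← mul_assoc (star (elemGE α gg ge₀ gl)) (elemGE α gg ge₀ gl) tF,
        hkk, heg_t, htt0]
    have hzy : star (ιG α (gg * u) * eh) * (ιG α (star s * hg) * eh) = eh := by
      rw [← hz, ← hsh_form, star_mul]
      have h1 : star (elemGE α gg ge₀ gl) * (ιG α (star s) * elemGE α hg he₀ lh)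
          = tF := by rw [htF_def, ← mul_assoc]
      rw [mul_assoc, h1, htt0]
    have hexp : ∀ p q : G, star (ιG α p * eh) * (ιG α q * eh) =
        eh * ιG α (star p * q) * eh := by
      intro p q
      rw [star_mul, ← ιG_star, EH_star α S hhH0.1,
        mul_assoc eh (ιG α (star p)) (ιG α q * eh), ιG_mul_assoc, ← mul_assoc]
    have hC : ιG α (gg * u) * eh = ιG α (star s * hg) * eh := by
      apply claimC α (EH_mem_NIdem α S hhH0.1) (EH_star α S hhH0.1)
      · rw [← hexp (gg * u) (gg * u)]; exact hzz
      · rw [← hexp (gg * u) (star s * hg)]; exact hzy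
    -- h · (tF)* = s · k
    have hskt : ιG α s * elemGE α gg ge₀ gl * tF = elemGE α hg he₀ lh := by
      rw [mul_assoc, hz, hC, hssh, ← hhdef]
    have hk_eg : elemGE α gg ge₀ gl * eg = elemGE α gg ge₀ gl := by
      rw [hkdef, mul_assoc, EH_idem α S hgH0.1]
    have hhts : elemGE α hg he₀ lh * star tF = ιG α s * elemGE α gg ge₀ gl := by
      rw [← hskt, mul_assoc (ιG α s * elemGE α gg ge₀ gl) tF (star tF), htt_eg,
        mul_assoc, hk_eg]
    have hstf2 : star tF = ιG α (star u) * eg := by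
      have h1 : ιG α (star u) * eg = eh * ιG α (star u) := by
        rw [← htt_eg, htts_eq]
        calc ιG α (star u) * (ιG α u * eh * ιG α (star u))
            = ιG α (star u) * (ιG α u * (eh * ιG α (star u))) := by
              simp only [mul_assoc]
          _ = ιG α (star u * u) * (eh * ιG α (star u)) := by rw [ιG_mul_assoc]
          _ = eh * ιG α (star u * u) * ιG α (star u) := by
              rw [← mul_assoc, NIdem_comm α (ιG_mem_NIdem α (isg_star_mul_idem u))
                (EH_mem_NIdem α S hhH0.1)]
          _ = eh * ιG α (star u) := by rw [hfabs0]
      rw [hstar_t, h1]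
    -- forward direction : P₂ → Q₁ ∧ Q₃
    have hforward : equivH α S (elemGE α rg re₀ rl) (ιG α s * elemGE α gg ge₀ gl) →
        (ιG α (star s) * elemGE α rg re₀ rl ∈ GH α S) ∧
        equivH α S (ιG α (star s) * elemGE α rg re₀ rl)
          (ιG α (star s) * elemGE α hg he₀ lh) := by
      rintro ⟨t', ht'H, hrt⟩
      obtain ⟨u', hu'S, f', hf', ht'f, hf'abs, ht't⟩ := Hgpd_struct α S hS ht'H
      have hsrt : ιG α (star s) * (elemGE α rg re₀ rl * t') = elemGE α gg ge₀ gl := by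
        rw [hrt, hsk_form, hssk, ← hkdef]
      have ht'f' : t' * f' = t' := by rw [ht'f, mul_assoc, EH_idem α S hf'.1]
      have hkf : elemGE α gg ge₀ gl * f' = elemGE α gg ge₀ gl := by
        rw [← hsrt, mul_assoc, mul_assoc, ht'f']
      have hegf : eg * f' = eg := by rw [← hkk, mul_assoc, hkf]
      have hf'eq : f' = eg :=
        (H0_eq α S hS hgH0 hf' (by rw [hegf]; exact hgH0.2.1)).symm
      rw [hf'eq] at ht'f ht't ht'f' hf'abs
      have ht't2 : t' * tF = ιG α (u' * u) * eh := by
        rw [ht'f, mul_assoc, heg_t, htf, ιG_mul_assoc]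
      have hq3eq : (ιG α (star s) * elemGE α rg re₀ rl) * (t' * tF) =
          ιG α (star s) * elemGE α hg he₀ lh := by
        calc (ιG α (star s) * elemGE α rg re₀ rl) * (t' * tF)
            = (ιG α (star s) * (elemGE α rg re₀ rl * t')) * tF := by
              simp only [mul_assoc]
          _ = elemGE α gg ge₀ gl * tF := by rw [hsrt]
          _ = ιG α (star s * hg) * eh := by rw [hz, hC]
          _ = ιG α (star s) * elemGE α hg he₀ lh := by rw [hsh_form]
      have ht''ne : t' * tF ≠ 0 := by
        intro h0
        apply hshne
        rw [← hq3eq, h0, mul_zero]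
      have ht''H : t' * tF ∈ Hgpd α S :=
        ⟨ht''ne, u' * u, hS.mul_mem hu'S huS, eh, hhH0, ht't2⟩
      have hst' : star t' = eg * ιG α (star u') := by
        rw [ht'f, star_mul, ← ιG_star, EH_star α S hgH0.1]
      have ht'ts : t' * star t' = ιG α u' * eg * ιG α (star u') := by
        rw [hst', ht'f, mul_assoc (ιG α u') eg (eg * ιG α (star u')),
          ← mul_assoc eg eg (ιG α (star u')), EH_idem α S hgH0.1, ← mul_assoc]
      have ht'tsEH : t' * star t' ∈ EH α S := by
        rw [ht'ts]; exact EH_conj α S hS hu'S hgH0.1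
      have hert'ne : er * t' ≠ 0 := by
        intro h0
        apply hskne
        rw [← hrt, hrdef, mul_assoc, h0, mul_zero]
      have hq2EH : er * (t' * star t') ∈ EH α S := EH_mul α S hS hrH0.1 ht'tsEH
      have ht'aux : t' * (star t' * t') = t' := by rw [ht't, ht'f']
      have hq2ne : er * (t' * star t') ≠ 0 := by
        intro h0
        apply hert'ne
        calc er * t' = er * (t' * (star t' * t')) := by rw [ht'aux]
          _ = (er * (t' * star t')) * t' := by simp only [mul_assoc]
          _ = 0 := by rw [h0, zero_mul]
      have hert : er * (t' * star t') = er :=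
        hrH0.2.2 _ hq2EH hq2ne
          (by rw [EH_comm α S hq2EH hrH0.1, ← mul_assoc, EH_idem α S hrH0.1])
      have hr_tt : elemGE α rg re₀ rl * (t' * star t') = elemGE α rg re₀ rl := by
        rw [hrdef, mul_assoc, hert]
      have hss_rt : ιG α s * (ιG α (star s) * (elemGE α rg re₀ rl * t')) =
          elemGE α rg re₀ rl * t' := by rw [hsrt, hrt]
      have hssr : ιG α s * (ιG α (star s) * elemGE α rg re₀ rl) =
          elemGE α rg re₀ rl := by
        calc ιG α s * (ιG α (star s) * elemGE α rg re₀ rl)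
            = ιG α s * (ιG α (star s) * (elemGE α rg re₀ rl * (t' * star t'))) := by
              rw [hr_tt]
          _ = (ιG α s * (ιG α (star s) * (elemGE α rg re₀ rl * t'))) * star t' := by
              simp only [mul_assoc]
          _ = (elemGE α rg re₀ rl * t') * star t' := by rw [hss_rt]
          _ = elemGE α rg re₀ rl * (t' * star t') := by rw [mul_assoc]
          _ = elemGE α rg re₀ rl := hr_tt
      have hsr_form : ιG α (star s) * elemGE α rg re₀ rl =
          ιG α (star s * rg) * er := by rw [hrdef, ιG_mul_assoc]
      have hssr_form : ιG α (s * (star s * rg)) * er = elemGE α rg re₀ rl := by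
        rw [← ιG_mul_assoc α s (star s * rg) er, ← hsr_form, hssr]
      have hstar_r : star (elemGE α rg re₀ rl) = er * ιG α (star rg) :=
        star_elemGE α hre hrl rg
      have h3r : star (elemGE α rg re₀ rl) * elemGE α rg re₀ rl = er := by
        rw [hrdef]; exact hr_ss
      have hkey : er * (ιG α (star rg * (s * (star s * rg))) * er) = er := by
        calc er * (ιG α (star rg * (s * (star s * rg))) * er)
            = (er * ιG α (star rg)) * (ιG α (s * (star s * rg)) * er) := by
              rw [mul_assoc er (ιG α (star rg)) (ιG α (s * (star s * rg)) * er),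
                ιG_mul_assoc]
          _ = star (elemGE α rg re₀ rl) * (ιG α (s * (star s * rg)) * er) := by
              rw [hstar_r]
          _ = star (elemGE α rg re₀ rl) * elemGE α rg re₀ rl := by rw [hssr_form]
          _ = er := h3r
      have habs_r : er * ιG α (star rg * (s * (star s * rg))) = er := by
        rw [NIdem_comm α (ιG_mem_NIdem α hnr_idem) (EH_mem_NIdem α S hrH0.1),
          ← mul_assoc, EH_idem α S hrH0.1] at hkey
        exact hkey
      have hsrne : ιG α (star s) * elemGE α rg re₀ rl ≠ 0 := by
        intro h0
        apply hrne
        rw [← hssr, h0, mul_zero]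
      exact ⟨⟨hsrne, star s * rg, er, hrH0, hsr_form, by rw [hnr_eq]; exact habs_r⟩,
        ⟨t' * tF, ht''H, hq3eq⟩⟩
    -- backward direction : Q₁ ∧ Q₃ → P₂
    have hbackward : (ιG α (star s) * elemGE α rg re₀ rl ∈ GH α S) →
        equivH α S (ιG α (star s) * elemGE α rg re₀ rl)
          (ιG α (star s) * elemGE α hg he₀ lh) →
        equivH α S (elemGE α rg re₀ rl) (ιG α s * elemGE α gg ge₀ gl) := by
      intro hQ₁ hQ₃
      obtain ⟨t'', ht''H, hrt''⟩ := hQ₃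
      have hsr_form : ιG α (star s) * elemGE α rg re₀ rl =
          ιG α (star s * rg) * er := by rw [hrdef, ιG_mul_assoc]
      obtain ⟨habs_r0, hsr_ss⟩ := GH_struct α S hS hrH0 (hsr_form ▸ hQ₁)
      have habs_r : er * ιG α (star rg * (s * (star s * rg))) = er := by
        rw [← hnr_eq]; exact habs_r0
      have hrg_nr : rg * (star rg * (s * (star s * rg))) = s * (star s * rg) :=
        isg_nabs rg s
      have hssr : ιG α s * (ιG α (star s) * elemGE α rg re₀ rl) =
          elemGE α rg re₀ rl := by
        rw [hsr_form, ιG_mul_assoc, ← hrg_nr, ← ιG_mul_assoc α rg _ er,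
          NIdem_comm α (ιG_mem_NIdem α hnr_idem) (EH_mem_NIdem α S hrH0.1),
          habs_r, ← hrdef]
      have hssh0 : ιG α s * (ιG α (star s) * elemGE α hg he₀ lh) =
          elemGE α hg he₀ lh := by rw [hsh_form, hssh, ← hhdef]
      have hrth : elemGE α rg re₀ rl * t'' = elemGE α hg he₀ lh := by
        calc elemGE α rg re₀ rl * t''
            = (ιG α s * (ιG α (star s) * elemGE α rg re₀ rl)) * t'' := by rw [hssr]
          _ = ιG α s * ((ιG α (star s) * elemGE α rg re₀ rl) * t'') := by
              simp only [mul_assoc]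
          _ = ιG α s * (ιG α (star s) * elemGE α hg he₀ lh) := by rw [hrt'']
          _ = elemGE α hg he₀ lh := hssh0
      obtain ⟨v, hvS, f'', hf'', ht''v, hf''abs, ht''t⟩ := Hgpd_struct α S hS ht''H
      have ht''f'' : t'' * f'' = t'' := by rw [ht''v, mul_assoc, EH_idem α S hf''.1]
      have hhf'' : elemGE α hg he₀ lh * f'' = elemGE α hg he₀ lh := by
        rw [← hrth, mul_assoc, ht''f'']
      have h3h : star (elemGE α hg he₀ lh) * elemGE α hg he₀ lh = eh := by
        rw [hhdef]; exact hh_ss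
      have hehf'' : eh * f'' = eh := by rw [← h3h, mul_assoc, hhf'']
      have hf''eq : f'' = eh :=
        (H0_eq α S hS hhH0 hf'' (by rw [hehf'']; exact hhH0.2.1)).symm
      rw [hf''eq] at ht''v
      have hmid : eh * (ιG α (star u) * eg) = ιG α (star u) * eg := by
        rw [← hstf2, hstar_t, ← mul_assoc, EH_idem α S hhH0.1]
      have ht''stf : t'' * star tF = ιG α (v * star u) * eg := by
        rw [ht''v, hstf2, mul_assoc, hmid, ιG_mul_assoc]
      have hft : elemGE α rg re₀ rl * (t'' * star tF) =
          ιG α s * elemGE α gg ge₀ gl := by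
        rw [← mul_assoc, hrth, hhts]
      have ht'ne : t'' * star tF ≠ 0 := by
        intro h0
        apply hskne
        rw [← hft, h0, mul_zero]
      exact ⟨t'' * star tF, ⟨ht'ne, v * star u,
        hS.mul_mem hvS (hS.star_mem huS), eg, hgH0, ht''stf⟩, hft⟩
    -- assemble the scalars
    rw [ind_pos hT, ind_pos hP₁, ind_pos hQ₂]
    by_cases hP₂ : equivH α S (elemGE α rg re₀ rl) (ιG α s * elemGE α gg ge₀ gl)
    · obtain ⟨hQ₁, hQ₃⟩ := hforward hP₂
      rw [ind_pos hP₂, ind_pos hQ₁, ind_pos hQ₃]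
      ring
    · rw [ind_neg hP₂]
      by_cases hQ₁ : ιG α (star s) * elemGE α rg re₀ rl ∈ GH α S
      · by_cases hQ₃ : equivH α S (ιG α (star s) * elemGE α rg re₀ rl)
            (ιG α (star s) * elemGE α hg he₀ lh)
        · exact absurd (hbackward hQ₁ hQ₃) hP₂
        · rw [ind_neg hQ₃]; ring
      · rw [ind_neg hQ₁]; ring

end Green
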